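/- arXiv:1707.07318 — 7 statements merged into one kernel-verified Lean document; each statement's English description precedes it below -/
import Mathlib

section
/- For all natural numbers p and q with 1 ≤ p, 1 ≤ q and p ≠ q, if ω₀(p, q) = 1 then ω₀(q, p ^^^ q) = 1 and ω₀(p ^^^ q, p) = 1 (the quaternion property for the twist of the doubling product P₀). -/
/-- Twist of the Cayley–Dickson doubling product `P₀ : (a,b)(c,d) = (ca − b*d, da* + bc)`. -/
def omega0 (p q : ℕ) : ℤ :=
  if p = 0 ∧ q = 0 then 1
  else if p % 2 = 0 then
    if q % 2 = 0 then omega0 (q / 2) (p / 2)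
    else if 0 < p / 2 then -omega0 (q / 2) (p / 2) else 1
  else
    if q % 2 = 0 then omega0 (p / 2) (q / 2)
    else if 0 < p / 2 then omega0 (p / 2) (q / 2) else -1
termination_by p + q
decreasing_by all_goals omega

lemma omega0_ee (r s : ℕ) : omega0 (2*r) (2*s) = omega0 s r := by
  rw [omega0]
  rcases Nat.eq_zero_or_pos (r+s) with h|h
  · have hr : r = 0 := by omega
    have hs : s = 0 := by omega
    subst hr; subst hs; simp [omega0]
  · have h1 : ¬(2*r = 0 ∧ 2*s = 0) := by omega
    simp only [h1, if_false, Nat.mul_mod_right, if_true, Nat.mul_div_cancel_left r (by norm_num : 0 < 2), Nat.mul_div_cancel_left s (by norm_num : 0 < 2)]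

lemma omega0_eo (r s : ℕ) : omega0 (2*r) (2*s+1) = if 0 < r then -omega0 s r else 1 := by
  rw [omega0]
  have h1 : ¬(2*r = 0 ∧ 2*s+1 = 0) := by omega
  have h2 : (2*s+1) % 2 = 1 := by omega
  have h3 : (2*s+1) / 2 = s := by omega
  simp [h1, h2, h3, Nat.mul_mod_right, Nat.mul_div_cancel_left]

lemma omega0_oe (r s : ℕ) : omega0 (2*r+1) (2*s) = omega0 r s := by
  rw [omega0]
  have h1 : ¬(2*r+1 = 0 ∧ 2*s = 0) := by omega
  have h2 : (2*r+1) % 2 = 1 := by omega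
  have h3 : (2*r+1) / 2 = r := by omega
  simp [h1, h2, h3, Nat.mul_mod_right, Nat.mul_div_cancel_left]

lemma omega0_oo (r s : ℕ) : omega0 (2*r+1) (2*s+1) = if 0 < r then omega0 r s else -1 := by
  rw [omega0]
  have h1 : ¬(2*r+1 = 0 ∧ 2*s+1 = 0) := by omega
  have h2 : (2*r+1) % 2 = 1 := by omega
  have h3 : (2*r+1) / 2 = r := by omega
  have h4 : (2*s+1) % 2 = 1 := by omega
  have h5 : (2*s+1) / 2 = s := by omega
  simp [h1, h2, h3, h4, h5]

lemma xor_ee (r s : ℕ) : (2*r) ^^^ (2*s) = 2*(r^^^s) := by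
  simpa [Nat.bit_val] using Nat.xor_bit false r false s

lemma xor_eo (r s : ℕ) : (2*r) ^^^ (2*s+1) = 2*(r^^^s)+1 := by
  simpa [Nat.bit_val] using Nat.xor_bit false r true s

lemma xor_oe (r s : ℕ) : (2*r+1) ^^^ (2*s) = 2*(r^^^s)+1 := by
  simpa [Nat.bit_val] using Nat.xor_bit true r false s

lemma xor_oo (r s : ℕ) : (2*r+1) ^^^ (2*s+1) = 2*(r^^^s) := by
  simpa [Nat.bit_val] using Nat.xor_bit true r true s

lemma xor_le_add : ∀ n p q : ℕ, p + q ≤ n → p ^^^ q ≤ p + q := by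
  intro n
  induction n with
  | zero =>
    intro p q h
    have hp : p = 0 := by omega
    have hq : q = 0 := by omega
    subst hp; subst hq; simp
  | succ n ih =>
    intro p q hn
    obtain ⟨r, hr⟩ : ∃ r, p = 2*r ∨ p = 2*r+1 := ⟨p/2, by omega⟩
    obtain ⟨s, hs⟩ : ∃ s, q = 2*s ∨ q = 2*s+1 := ⟨q/2, by omega⟩
    rcases hr with hr|hr <;> rcases hs with hs|hs <;> subst hr <;> subst hs <;>
      [rw [xor_ee]; rw [xor_eo]; rw [xor_oe]; rw [xor_oo]] <;>
      have := ih r s (by omega) <;> omega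

lemma xor_cancel (r s : ℕ) : r ^^^ (r ^^^ s) = s := by
  rw [← Nat.xor_assoc, Nat.xor_self, Nat.zero_xor]

lemma omega0_zero (n : ℕ) : omega0 0 n = 1 ∧ omega0 n 0 = 1 := by
  induction n using Nat.strong_induction_on with
  | _ n ih =>
    obtain ⟨m, hm⟩ : ∃ m, n = 2*m ∨ n = 2*m+1 := ⟨n/2, by omega⟩
    rcases Nat.eq_zero_or_pos n with h0|h0
    · subst h0; simp [omega0]
    rcases hm with hm|hm <;> subst hm
    · have h1 : omega0 (2*0) (2*m) = omega0 m 0 := omega0_ee 0 m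
      have h2 : omega0 (2*m) (2*0) = omega0 0 m := omega0_ee m 0
      have := ih m (by omega)
      constructor
      · simpa using h1.trans this.2
      · simpa using h2.trans this.1
    · have h1 : omega0 (2*0) (2*m+1) = 1 := by rw [omega0_eo]; simp
      have h2 : omega0 (2*m+1) (2*0) = omega0 m 0 := omega0_oe m 0
      constructor
      · simpa using h1
      · have := (ih m (by omega)).2
        simpa using h2.trans this

lemma omega0_self (n : ℕ) (hn : 1 ≤ n) : omega0 n n = -1 := by
  induction n using Nat.strong_induction_on with
  | _ n ih =>
    obtain ⟨m, hm⟩ : ∃ m, n = 2*m ∨ n = 2*m+1 := ⟨n/2, by omega⟩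
    rcases hm with hm|hm <;> subst hm
    · rw [omega0_ee]
      exact ih m (by omega) (by omega)
    · rw [omega0_oo]
      rcases Nat.eq_zero_or_pos m with h|h
      · simp [h]
      · rw [if_pos h]
        exact ih m (by omega) h

lemma omega0_key : ∀ n p q : ℕ, p + q ≤ n → 1 ≤ p → 1 ≤ q → p ≠ q →
    omega0 q (p ^^^ q) = omega0 p q ∧ omega0 (p ^^^ q) p = omega0 p q ∧
    omega0 q p = -omega0 p q := by
  intro n
  induction n with
  | zero => intro p q h hp hq _; omega
  | succ n ih =>
    intro p q hn hp hq hpq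
    obtain ⟨r, hr⟩ : ∃ r, p = 2*r ∨ p = 2*r+1 := ⟨p/2, by omega⟩
    obtain ⟨s, hs⟩ : ∃ s, q = 2*s ∨ q = 2*s+1 := ⟨q/2, by omega⟩
    have hxle : r ^^^ s ≤ r + s := xor_le_add (r+s) r s le_rfl
    have hxc : s ^^^ r = r ^^^ s := Nat.xor_comm s r
    rcases hr with hr|hr <;> rcases hs with hs|hs <;> subst hr <;> subst hs
    · -- even, even
      rw [xor_ee, omega0_ee, omega0_ee, omega0_ee, omega0_ee]
      obtain ⟨h1, h2, h3⟩ := ih s r (by omega) (by omega) (by omega) (by omega)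
      rw [hxc] at h1 h2
      exact ⟨h2, h1, by linarith⟩
    · -- even, odd : p = 2r, q = 2s+1, r ≥ 1
      have hr1 : 0 < r := by omega
      rw [xor_eo, omega0_oo, omega0_oe, omega0_oe, omega0_eo, if_pos hr1]
      rcases Nat.eq_zero_or_pos s with hs0|hs1
      · subst hs0
        simp only [Nat.xor_zero, if_neg (lt_irrefl 0)]
        simp [(omega0_zero r).1, omega0_self r hr1]
      · rw [if_pos hs1]
        by_cases hrs : r = s
        · subst hrs
          rw [Nat.xor_self]
          simp [(omega0_zero r).1, (omega0_zero r).2, omega0_self r hr1]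
        · have ht : 0 < r ^^^ s := by
            rcases Nat.eq_zero_or_pos (r ^^^ s) with h|h
            · exact absurd ((xor_eq_zero_iff (α := ℕ)).mp h) hrs
            · exact h
          obtain ⟨h1, h2, _⟩ := ih s r (by omega) (by omega) (by omega) (Ne.symm hrs)
          rw [hxc] at h1 h2
          have hne1 : r ^^^ s ≠ s := fun h => by
            have h' : r ^^^ s ^^^ s = s ^^^ s := by rw [h]
            rw [Nat.xor_assoc, Nat.xor_self, Nat.xor_zero] at h'
            omega
          have hne2 : r ≠ r ^^^ s := fun h => by
            have h' : r ^^^ r = r ^^^ (r ^^^ s) := by rw [← h]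
            rw [Nat.xor_self, xor_cancel] at h'
            omega
          obtain ⟨_, _, a1⟩ := ih (r ^^^ s) s (by omega) ht hs1 hne1
          obtain ⟨_, _, a2⟩ := ih r (r ^^^ s) (by omega) hr1 ht hne2
          refine ⟨?_, ?_, by ring⟩
          · rw [a1, h2]
          · rw [a2, h1]
    · -- odd, even : p = 2r+1, q = 2s, s ≥ 1
      have hs1 : 0 < s := by omega
      rw [xor_oe, omega0_eo, omega0_oo, omega0_eo, omega0_oe, if_pos hs1, if_pos hs1]
      rcases Nat.eq_zero_or_pos r with hr0|hr1
      · subst hr0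
        simp only [Nat.zero_xor]
        simp [hs1, (omega0_zero s).1, (omega0_zero s).2, omega0_self s hs1]
      · by_cases hrs : r = s
        · subst hrs
          rw [Nat.xor_self]
          simp [(omega0_zero r).1, omega0_self r hr1]
        · have ht : 0 < r ^^^ s := by
            rcases Nat.eq_zero_or_pos (r ^^^ s) with h|h
            · exact absurd ((xor_eq_zero_iff (α := ℕ)).mp h) hrs
            · exact h
          obtain ⟨h1, h2, _⟩ := ih r s (by omega) hr1 hs1 hrs
          have hne1 : s ≠ r ^^^ s := fun h => by
            have h' : s ^^^ s = r ^^^ s ^^^ s := by rw [← h]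
            rw [Nat.xor_self, Nat.xor_assoc, Nat.xor_self, Nat.xor_zero] at h'
            omega
          obtain ⟨_, _, a1⟩ := ih s (r ^^^ s) (by omega) hs1 ht hne1
          refine ⟨?_, ?_, by ring⟩
          · rw [a1, h1]; ring
          · rw [if_pos ht]; exact h2
    · -- odd, odd : p = 2r+1, q = 2s+1, r ≠ s
      have hrs : r ≠ s := by omega
      have ht : 0 < r ^^^ s := by
        rcases Nat.eq_zero_or_pos (r ^^^ s) with h|h
        · exact absurd ((xor_eq_zero_iff (α := ℕ)).mp h) hrs
        · exact h
      rw [xor_oo, omega0_oe, omega0_eo, omega0_oo, omega0_oo, if_pos ht]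
      rcases Nat.eq_zero_or_pos r with hr0|hr1
      · subst hr0
        have hs1 : 0 < s := by omega
        simp only [Nat.zero_xor, if_neg (lt_irrefl 0), if_pos hs1]
        simp [(omega0_zero s).1, (omega0_zero s).2, omega0_self s hs1]
      · rw [if_pos hr1]
        rcases Nat.eq_zero_or_pos s with hs0|hs1
        · subst hs0
          simp only [Nat.xor_zero, if_neg (lt_irrefl 0)]
          simp [(omega0_zero r).1, (omega0_zero r).2, omega0_self r hr1]
        · rw [if_pos hs1]
          obtain ⟨h1, h2, h3⟩ := ih r s (by omega) hr1 hs1 hrs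
          have hne2 : r ≠ r ^^^ s := fun h => by
            have h' : r ^^^ r = r ^^^ (r ^^^ s) := by rw [← h]
            rw [Nat.xor_self, xor_cancel] at h'
            omega
          obtain ⟨_, _, a2⟩ := ih r (r ^^^ s) (by omega) hr1 ht hne2
          refine ⟨h1, ?_, h3⟩
          · rw [← a2]; exact h2

/-- The quaternion property for the twist of the doubling product P0. -/
theorem omega0_quaternion_property (p q : ℕ) (hp : 1 ≤ p) (hq : 1 ≤ q) (hpq : p ≠ q)
    (h : omega0 p q = 1) :
    omega0 q (p ^^^ q) = 1 ∧ omega0 (p ^^^ q) p = 1 := by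
  obtain ⟨h1, h2, _⟩ := omega0_key (p+q) p q le_rfl hp hq hpq
  exact ⟨h1.trans h, h2.trans h⟩
end

section
/- For all natural numbers p and q with 1 ≤ p, 1 ≤ q and p ≠ q, if ω₁(p, q) = 1 then ω₁(q, p ^^^ q) = 1 and ω₁(p ^^^ q, p) = 1 (the quaternion property for the twist of the doubling product P₁). -/
/-- Twist of the Cayley–Dickson doubling product `P₁ : (a,b)(c,d) = (ca − db*, a*d + cb)`. -/
def omega1 (p q : ℕ) : ℤ :=
  if p = 0 ∧ q = 0 then 1
  else if p % 2 = 0 then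
    if q % 2 = 0 then omega1 (q / 2) (p / 2)
    else if 0 < p / 2 then -omega1 (p / 2) (q / 2) else 1
  else
    if q % 2 = 0 then omega1 (q / 2) (p / 2)
    else if 0 < p / 2 then omega1 (q / 2) (p / 2) else -1
termination_by p + q
decreasing_by all_goals omega

lemma xor00 (a b : ℕ) : (2*a) ^^^ (2*b) = 2*(a^^^b) := by
  have := Nat.xor_bit false a false b; simpa [Nat.bit] using this
lemma xor01 (a b : ℕ) : (2*a) ^^^ (2*b+1) = 2*(a^^^b)+1 := by
  have := Nat.xor_bit false a true b; simpa [Nat.bit] using this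
lemma xor10 (a b : ℕ) : (2*a+1) ^^^ (2*b) = 2*(a^^^b)+1 := by
  have := Nat.xor_bit true a false b; simpa [Nat.bit] using this
lemma xor11 (a b : ℕ) : (2*a+1) ^^^ (2*b+1) = 2*(a^^^b) := by
  have := Nat.xor_bit true a true b; simpa [Nat.bit] using this

lemma xor_le_add_s1 : ∀ a b : ℕ, a ^^^ b ≤ a + b := by
  intro a
  induction a using Nat.strong_induction_on with
  | _ a ih =>
    intro b
    obtain ⟨a', rfl | rfl⟩ := Nat.even_or_odd' a <;>
      obtain ⟨b', rfl | rfl⟩ := Nat.even_or_odd' b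
    · rcases Nat.eq_zero_or_pos a' with rfl | h
      · simp
      · rw [xor00]; have := ih a' (by omega) b'; omega
    · rcases Nat.eq_zero_or_pos a' with rfl | h
      · simp
      · rw [xor01]; have := ih a' (by omega) b'; omega
    · rw [xor10]; have := ih a' (by omega) b'; omega
    · rw [xor11]; have := ih a' (by omega) b'; omega

lemma omega1_zero : ∀ a : ℕ, omega1 a 0 = 1 ∧ omega1 0 a = 1 := by
  intro a
  induction a using Nat.strong_induction_on with
  | _ a ih =>
    rcases Nat.eq_zero_or_pos a with rfl | ha
    · constructor <;> (rw [omega1]; simp)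
    constructor
    · rw [omega1]
      rcases Nat.even_or_odd a with ⟨a', rfl⟩ | ⟨a', rfl⟩
      · have h2 : (a'+a') % 2 = 0 := by omega
        have h3 : (a'+a') / 2 = a' := by omega
        simp [h2, h3, (ih a' (by omega)).2]
      · have h2 : (2*a'+1) % 2 = 1 := by omega
        have h3 : (2*a'+1) / 2 = a' := by omega
        simp [h2, h3, (ih a' (by omega)).2]
    · rw [omega1]
      rcases Nat.even_or_odd a with ⟨a', rfl⟩ | ⟨a', rfl⟩
      · have h2 : (a'+a') % 2 = 0 := by omega
        have h3 : (a'+a') / 2 = a' := by omega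
        simp [h2, h3, ha.ne', (ih a' (by omega)).1]
      · have h2 : (2*a'+1) % 2 = 1 := by omega
        simp [h2]

lemma omega1_diag : ∀ a : ℕ, 1 ≤ a → omega1 a a = -1 := by
  intro a
  induction a using Nat.strong_induction_on with
  | _ a ih =>
    intro ha
    rw [omega1]
    rcases Nat.even_or_odd a with ⟨a', rfl⟩ | ⟨a', rfl⟩
    · have h2 : (a'+a') % 2 = 0 := by omega
      have h3 : (a'+a') / 2 = a' := by omega
      have : a' ≠ 0 := by omega
      simp [h2, h3, this, ih a' (by omega) (by omega)]
    · have h2 : (2*a'+1) % 2 = 1 := by omega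
      have h3 : (2*a'+1) / 2 = a' := by omega
      rcases Nat.eq_zero_or_pos a' with rfl | h
      · simp [h2, h3]
      · simp [h2, h3, h, ih a' (by omega) h]

lemma omega1_ee (a b : ℕ) (h : ¬(a = 0 ∧ b = 0)) : omega1 (2*a) (2*b) = omega1 b a := by
  rw [omega1]
  have h1 : ¬(2*a = 0 ∧ 2*b = 0) := by omega
  simp [h1, Nat.mul_div_cancel_left, Nat.mul_mod_right]
  intro ha hb; exact absurd ⟨ha, hb⟩ h

lemma omega1_eo (a b : ℕ) (h : 0 < a) : omega1 (2*a) (2*b+1) = -omega1 a b := by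
  rw [omega1]
  have h1 : ¬(2*a = 0 ∧ 2*b+1 = 0) := by omega
  have h2 : (2*b+1) % 2 = 1 := by omega
  have h3 : (2*b+1) / 2 = b := by omega
  simp [h1, h2, h3, Nat.mul_div_cancel_left, Nat.mul_mod_right, h]

lemma omega1_eo0 (b : ℕ) : omega1 0 (2*b+1) = 1 := by
  rw [omega1]
  have h2 : (2*b+1) % 2 = 1 := by omega
  simp [h2]

lemma omega1_oe (a b : ℕ) : omega1 (2*a+1) (2*b) = omega1 b a := by
  rw [omega1]
  have h1 : (2*a+1) % 2 = 1 := by omega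
  have h3 : (2*a+1) / 2 = a := by omega
  simp [h1, h3, Nat.mul_div_cancel_left, Nat.mul_mod_right]

lemma omega1_oo (a b : ℕ) (h : 0 < a) : omega1 (2*a+1) (2*b+1) = omega1 b a := by
  rw [omega1]
  have h1 : (2*a+1) % 2 = 1 := by omega
  have h2 : (2*b+1) % 2 = 1 := by omega
  have h3 : (2*a+1) / 2 = a := by omega
  have h4 : (2*b+1) / 2 = b := by omega
  simp [h1, h2, h3, h4, h]

lemma omega1_oo0 (b : ℕ) : omega1 1 (2*b+1) = -1 := by
  rw [omega1]
  have h2 : (2*b+1) % 2 = 1 := by omega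
  simp [h2]

lemma omega1_o1 (b : ℕ) (h : 0 < b) : omega1 (2*b+1) 1 = omega1 0 b := by
  rw [omega1]
  have h1 : (2*b+1) % 2 = 1 := by omega
  have h3 : (2*b+1) / 2 = b := by omega
  simp [h1, h3, h]

lemma omega1_key : ∀ n, ∀ p q : ℕ, p + q ≤ n → 1 ≤ p → 1 ≤ q → p ≠ q →
    omega1 q p = -omega1 p q ∧ omega1 q (p ^^^ q) = omega1 p q := by
  intro n
  induction n using Nat.strong_induction_on with
  | _ n ih =>
    intro p q hn hp hq hpq
    obtain ⟨a, rfl | rfl⟩ := Nat.even_or_odd' p <;>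
      obtain ⟨b, rfl | rfl⟩ := Nat.even_or_odd' q
    · -- p = 2a, q = 2b
      have ha : 1 ≤ a := by omega
      have hb : 1 ≤ b := by omega
      have hab : a ≠ b := by omega
      have hxne : a ^^^ b ≠ 0 := xor_eq_zero_iff.not.2 hab
      have hle : a ^^^ b ≤ a + b := xor_le_add_s1 a b
      have hane : a ≠ a ^^^ b := by
        intro h
        have h0 := xor_cancel_left a b
        rw [← h] at h0
        simp at h0; omega
      rw [xor00]
      constructor
      · rw [omega1_ee b a (by omega), omega1_ee a b (by omega)]
        exact (ih (n-1) (by omega) b a (by omega) hb ha hab.symm).1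
      · rw [omega1_ee b (a ^^^ b) (by omega), omega1_ee a b (by omega)]
        have c1 := (ih (n-1) (by omega) b a (by omega) hb ha hab.symm).2
        rw [Nat.xor_comm b a] at c1
        have c2 := (ih (n-1) (by omega) a (a ^^^ b) (by omega) ha
          (Nat.pos_of_ne_zero hxne) hane).2
        rw [xor_cancel_left] at c2
        linarith
    · -- p = 2a, q = 2b+1
      have ha : 1 ≤ a := by omega
      rw [xor01]
      constructor
      · rw [omega1_oe b a, omega1_eo a b ha]; ring
      · rw [omega1_eo a b ha]
        rcases Nat.eq_zero_or_pos b with rfl | hb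
        · simp only [Nat.xor_zero]
          rw [show (2*0+1 : ℕ) = 1 from rfl, omega1_oo0, (omega1_zero a).1]
        · by_cases hab : a = b
          · subst hab
            rw [Nat.xor_self]
            simp only [mul_zero, zero_add]
            rw [omega1_o1 a hb, (omega1_zero a).2, omega1_diag a hb]
            norm_num
          · have hxne : a ^^^ b ≠ 0 := xor_eq_zero_iff.not.2 hab
            have hle : a ^^^ b ≤ a + b := xor_le_add_s1 a b
            have hcb : a ^^^ b ≠ b := by
              intro h
              have h0 : (a ^^^ b) ^^^ b = b ^^^ b := by rw [h]
              rw [Nat.xor_assoc, Nat.xor_self, Nat.xor_zero] at h0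
              omega
            rw [omega1_oo b (a ^^^ b) hb]
            have c1 := (ih (n-1) (by omega) b (a ^^^ b) (by omega) hb
              (Nat.pos_of_ne_zero hxne) (Ne.symm hcb)).1
            have c2 := (ih (n-1) (by omega) a b (by omega) ha hb hab).2
            linarith
    · -- p = 2a+1, q = 2b
      have hb : 1 ≤ b := by omega
      rw [xor10]
      constructor
      · rw [omega1_eo b a hb, omega1_oe a b]
      · rw [omega1_eo b (a ^^^ b) hb, omega1_oe a b]
        rcases Nat.eq_zero_or_pos a with rfl | ha
        · rw [Nat.zero_xor, omega1_diag b hb, (omega1_zero b).1]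
          norm_num
        · by_cases hab : a = b
          · subst hab
            rw [Nat.xor_self, (omega1_zero a).1, omega1_diag a hb]
          · have c1 := (ih (n-1) (by omega) a b (by omega) ha hb hab).1
            have c2 := (ih (n-1) (by omega) a b (by omega) ha hb hab).2
            linarith
    · -- p = 2a+1, q = 2b+1
      have hab : a ≠ b := by omega
      rw [xor11]
      constructor
      · rcases Nat.eq_zero_or_pos a with rfl | ha
        · have hb : 1 ≤ b := by omega
          simp only [mul_zero, zero_add]
          rw [omega1_o1 b hb, omega1_oo0 b, (omega1_zero b).2]
          norm_num
        · rcases Nat.eq_zero_or_pos b with rfl | hb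
          · simp only [mul_zero, zero_add]
            rw [omega1_oo0 a, omega1_o1 a ha, (omega1_zero a).2]
          · rw [omega1_oo b a hb, omega1_oo a b ha]
            exact (ih (n-1) (by omega) b a (by omega) hb ha hab.symm).1
      · rw [omega1_oe b (a ^^^ b)]
        rcases Nat.eq_zero_or_pos a with rfl | ha
        · have hb : 1 ≤ b := by omega
          simp only [mul_zero, zero_add]
          rw [Nat.zero_xor, omega1_diag b hb, omega1_oo0 b]
        · rcases Nat.eq_zero_or_pos b with rfl | hb
          · simp only [mul_zero, zero_add]
            rw [Nat.xor_zero, (omega1_zero a).1, omega1_o1 a ha, (omega1_zero a).2]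
          · rw [omega1_oo a b ha]
            have hxne : a ^^^ b ≠ 0 := xor_eq_zero_iff.not.2 hab
            have hle : a ^^^ b ≤ a + b := xor_le_add_s1 a b
            have hane : a ≠ a ^^^ b := by
              intro h
              have h0 := xor_cancel_left a b
              rw [← h] at h0
              simp at h0; omega
            have c1 := (ih (n-1) (by omega) b a (by omega) hb ha hab.symm).2
            rw [Nat.xor_comm b a] at c1
            have c2 := (ih (n-1) (by omega) a (a ^^^ b) (by omega) ha
              (Nat.pos_of_ne_zero hxne) hane).2
            rw [xor_cancel_left] at c2
            linarith

/-- The quaternion property for the twist of the doubling product P1. -/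
theorem omega1_quaternion_property (p q : ℕ) (hp : 1 ≤ p) (hq : 1 ≤ q) (hpq : p ≠ q)
    (h : omega1 p q = 1) :
    omega1 q (p ^^^ q) = 1 ∧ omega1 (p ^^^ q) p = 1 := by
  have hx : p ^^^ q ≠ 0 := xor_eq_zero_iff.not.2 hpq
  have k1 := (omega1_key (p + q) p q le_rfl hp hq hpq).2
  have hqx : q ≠ p ^^^ q := by
    intro e
    have h0 := xor_cancel_right p q
    rw [← e] at h0
    simp at h0; omega
  have k2 := (omega1_key (q + (p ^^^ q)) q (p ^^^ q) le_rfl hq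
    (Nat.pos_of_ne_zero hx) hqx).2
  rw [Nat.xor_comm p q, xor_cancel_left] at k2
  rw [Nat.xor_comm q p] at k2
  constructor
  · rw [k1, h]
  · rw [k2, k1, h]
end

section
/- For all natural numbers p and q with 1 ≤ p, 1 ≤ q and p ≠ q, if ω₂(p, q) = 1 then ω₂(q, p ^^^ q) = 1 and ω₂(p ^^^ q, p) = 1 (the quaternion property for the twist of the doubling product P₂). -/
/-- Twist of the Cayley–Dickson doubling product `P₂ : (a,b)(c,d) = (ac − b*d, da* + bc)`. -/
def omega2 (p q : ℕ) : ℤ :=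
  if p = 0 ∧ q = 0 then 1
  else if p % 2 = 0 then
    if q % 2 = 0 then omega2 (p / 2) (q / 2)
    else if 0 < p / 2 then -omega2 (q / 2) (p / 2) else 1
  else
    if q % 2 = 0 then omega2 (p / 2) (q / 2)
    else if 0 < p / 2 then omega2 (p / 2) (q / 2) else -1
termination_by p + q
decreasing_by all_goals omega

lemma omega2_ee (r s : ℕ) : omega2 (2*r) (2*s) = omega2 r s := by
  rw [omega2]
  rcases Nat.eq_zero_or_pos (r+s) with h | h
  · have hr : r = 0 := by omega
    have hs : s = 0 := by omega
    subst hr; subst hs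
    rw [omega2]; simp
  · have h1 : ¬(2*r = 0 ∧ 2*s = 0) := by omega
    have m1 : (2*r) % 2 = 0 := by omega
    have m2 : (2*s) % 2 = 0 := by omega
    have d1 : (2*r) / 2 = r := by omega
    have d2 : (2*s) / 2 = s := by omega
    rw [if_neg h1, if_pos m1, if_pos m2, d1, d2]

lemma omega2_eo (r s : ℕ) : omega2 (2*r) (2*s+1) = if 0 < r then -omega2 s r else 1 := by
  rw [omega2]
  have h1 : ¬(2*r = 0 ∧ 2*s+1 = 0) := by omega
  have h2 : (2*s+1) % 2 = 1 := by omega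
  have h3 : (2*s+1)/2 = s := by omega
  simp [h1, h2, h3, Nat.mul_div_cancel_left, Nat.mul_mod_right]

lemma omega2_oe (r s : ℕ) : omega2 (2*r+1) (2*s) = omega2 r s := by
  rw [omega2]
  have h2 : (2*r+1) % 2 = 1 := by omega
  have h3 : (2*r+1)/2 = r := by omega
  simp [h2, h3, Nat.mul_div_cancel_left, Nat.mul_mod_right]

lemma omega2_oo (r s : ℕ) : omega2 (2*r+1) (2*s+1) = if 0 < r then omega2 r s else -1 := by
  rw [omega2]
  have h2 : (2*r+1) % 2 = 1 := by omega
  have h2' : (2*s+1) % 2 = 1 := by omega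
  have h3 : (2*r+1)/2 = r := by omega
  have h3' : (2*s+1)/2 = s := by omega
  simp [h2, h2', h3, h3']

lemma nxor_ee (r s : ℕ) : (2*r) ^^^ (2*s) = 2*(r ^^^ s) := by
  simpa [Nat.bit_val, Nat.mul_comm] using Nat.xor_bit false r false s

lemma nxor_eo (r s : ℕ) : (2*r) ^^^ (2*s+1) = 2*(r ^^^ s) + 1 := by
  simpa [Nat.bit_val, Nat.mul_comm] using Nat.xor_bit false r true s

lemma nxor_oe (r s : ℕ) : (2*r+1) ^^^ (2*s) = 2*(r ^^^ s) + 1 := by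
  simpa [Nat.bit_val, Nat.mul_comm] using Nat.xor_bit true r false s

lemma nxor_oo (r s : ℕ) : (2*r+1) ^^^ (2*s+1) = 2*(r ^^^ s) := by
  simpa [Nat.bit_val, Nat.mul_comm] using Nat.xor_bit true r true s

lemma nxor_le_add (r s : ℕ) : r ^^^ s ≤ r + s := by
  rcases Nat.eq_zero_or_pos (r + s) with h | h
  · have hr : r = 0 := by omega
    have hs : s = 0 := by omega
    subst hr; subst hs; simp
  · obtain ⟨a, b, hb, rfl⟩ : ∃ a b, b < 2 ∧ r = 2*a + b := ⟨r/2, r%2, by omega, by omega⟩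
    obtain ⟨c, d, hd, rfl⟩ : ∃ c d, d < 2 ∧ s = 2*c + d := ⟨s/2, s%2, by omega, by omega⟩
    have key := nxor_le_add a c
    interval_cases b <;> interval_cases d <;>
      simp only [Nat.add_zero, nxor_ee, nxor_eo, nxor_oe, nxor_oo] <;> omega
termination_by r + s
decreasing_by all_goals omega

lemma omega2_zero_right (p : ℕ) : omega2 p 0 = 1 := by
  rcases Nat.eq_zero_or_pos p with rfl | h
  · rw [omega2]; simp
  · obtain ⟨r, b, hb, rfl⟩ : ∃ r b, b < 2 ∧ p = 2*r + b := ⟨p/2, p%2, by omega, by omega⟩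
    interval_cases b
    · have hr : 0 < r := by omega
      have := omega2_zero_right r
      simpa [omega2_ee r 0] using this
    · have := omega2_zero_right r
      simpa [omega2_oe r 0] using this
termination_by p
decreasing_by all_goals omega

lemma omega2_zero_left (q : ℕ) : omega2 0 q = 1 := by
  rcases Nat.eq_zero_or_pos q with rfl | h
  · rw [omega2]; simp
  · obtain ⟨s, c, hc, rfl⟩ : ∃ s c, c < 2 ∧ q = 2*s + c := ⟨q/2, q%2, by omega, by omega⟩
    interval_cases c
    · have hs : 0 < s := by omega
      have h2 := omega2_ee 0 s
      norm_num at h2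
      simpa [h2] using omega2_zero_left s
    · have h2 := omega2_eo 0 s
      norm_num at h2
      exact h2
termination_by q
decreasing_by all_goals omega

lemma omega2_diag (p : ℕ) (hp : 1 ≤ p) : omega2 p p = -1 := by
  obtain ⟨r, b, hb, rfl⟩ : ∃ r b, b < 2 ∧ p = 2*r + b := ⟨p/2, p%2, by omega, by omega⟩
  interval_cases b
  · have hr : 1 ≤ r := by omega
    have := omega2_diag r hr
    simpa [omega2_ee r r] using this
  · rcases Nat.eq_zero_or_pos r with rfl | hr
    · simp [omega2_oo 0 0]
    · have := omega2_diag r hr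
      simp [omega2_oo r r, hr, this]
termination_by p
decreasing_by all_goals omega

theorem omega2_key (p q : ℕ) (hp : 1 ≤ p) (hq : 1 ≤ q) (hpq : p ≠ q) :
    omega2 q p = -omega2 p q ∧ omega2 q (p ^^^ q) = omega2 p q ∧
      omega2 (p ^^^ q) p = omega2 p q := by
  obtain ⟨r, b, hb, rfl⟩ : ∃ r b, b < 2 ∧ p = 2*r + b := ⟨p/2, p%2, by omega, by omega⟩
  obtain ⟨s, c, hc, rfl⟩ : ∃ s c, c < 2 ∧ q = 2*s + c := ⟨q/2, q%2, by omega, by omega⟩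
  have hxle := nxor_le_add r s
  interval_cases b <;> interval_cases c <;>
    simp only [Nat.add_zero, nxor_ee, nxor_eo, nxor_oe, nxor_oo,
      omega2_ee, omega2_eo, omega2_oe, omega2_oo]
  -- case even, even
  · have hr : 1 ≤ r := by omega
    have hs : 1 ≤ s := by omega
    have hrs : r ≠ s := by omega
    exact omega2_key r s hr hs hrs
  -- case even, odd
  · have hr : 0 < r := by omega
    rw [if_pos hr]
    refine ⟨by ring, ?_, ?_⟩
    · -- (if 0 < s then omega2 s (r^^^s) else -1) = -omega2 s r
      rcases Nat.eq_zero_or_pos s with rfl | hs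
      · simp [omega2_zero_left]
      · rcases eq_or_ne r s with rfl | hrs
        · simp [hr, Nat.xor_self, omega2_zero_right, omega2_diag r hr]
        · have IH := omega2_key r s hr hs hrs
          have IH2 := (omega2_key s r hs hr hrs.symm).1
          rw [if_pos hs, IH.2.1, IH2]
    · -- omega2 (r^^^s) r = -omega2 s r
      rcases Nat.eq_zero_or_pos s with rfl | hs
      · simp [Nat.xor_zero, omega2_zero_left, omega2_diag r hr]
      · rcases eq_or_ne r s with rfl | hrs
        · simp [Nat.xor_self, omega2_zero_left, omega2_diag r hr]
        · have IH := omega2_key r s hr hs hrs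
          have IH2 := (omega2_key s r hs hr hrs.symm).1
          rw [IH.2.2, IH2]
  -- case odd, even
  · have hs : 0 < s := by omega
    refine ⟨by simp [hs], ?_, ?_⟩
    · -- (if 0 < s then -omega2 (r^^^s) s else 1) = omega2 r s
      rcases Nat.eq_zero_or_pos r with rfl | hr
      · simp [hs, Nat.zero_xor, omega2_zero_left, omega2_diag s hs]
      · rcases eq_or_ne r s with rfl | hrs
        · simp [hs, Nat.xor_self, omega2_zero_left, omega2_diag r hr]
        · have hx : 0 < r ^^^ s := Nat.pos_of_ne_zero (Nat.xor_ne_zero_iff.mpr hrs)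
          have hne : s ≠ r ^^^ s := by
            intro h
            have h2 : s ^^^ s = (r ^^^ s) ^^^ s := by rw [← h]
            simp [Nat.xor_xor_cancel_right] at h2
            omega
          have IH := omega2_key r s hr hs hrs
          have IH2 := (omega2_key s (r ^^^ s) hs hx hne).1
          rw [if_pos hs, IH2, IH.2.1]; ring
    · -- (if 0 < r^^^s then omega2 (r^^^s) r else -1) = omega2 r s
      rcases Nat.eq_zero_or_pos r with rfl | hr
      · simp [hs, Nat.zero_xor, omega2_zero_left, omega2_zero_right]
      · rcases eq_or_ne r s with rfl | hrs
        · simp [Nat.xor_self, omega2_diag r hr]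
        · have hx : 0 < r ^^^ s := Nat.pos_of_ne_zero (Nat.xor_ne_zero_iff.mpr hrs)
          have IH := omega2_key r s hr hs hrs
          rw [if_pos hx, IH.2.2]
  -- case odd, odd
  · have hrs : r ≠ s := by omega
    have hx : 0 < r ^^^ s := Nat.pos_of_ne_zero (Nat.xor_ne_zero_iff.mpr hrs)
    rw [if_pos hx]
    rcases Nat.eq_zero_or_pos r with rfl | hr
    · have hs : 0 < s := by omega
      simp [hs, Nat.zero_xor, omega2_zero_right, omega2_zero_left, omega2_diag s hs]
    · rcases Nat.eq_zero_or_pos s with rfl | hs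
      · simp [hr, Nat.xor_zero, omega2_zero_right, omega2_zero_left, omega2_diag r hr]
      · have hne : r ≠ r ^^^ s := by
          intro h
          have h2 : r ^^^ r = r ^^^ (r ^^^ s) := by rw [← h]
          simp [Nat.xor_xor_cancel_left] at h2
          omega
        have IH := omega2_key r s hr hs hrs
        have IH3 := (omega2_key r (r ^^^ s) hr hx hne).1
        rw [if_pos hr, if_pos hs]
        refine ⟨IH.1, IH.2.1, ?_⟩
        linarith [IH3, IH.2.2]
termination_by p + q
decreasing_by all_goals omega

/-- The quaternion property for the twist of the doubling product P2. -/
theorem omega2_quaternion_property (p q : ℕ) (hp : 1 ≤ p) (hq : 1 ≤ q) (hpq : p ≠ q)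
    (h : omega2 p q = 1) :
    omega2 q (p ^^^ q) = 1 ∧ omega2 (p ^^^ q) p = 1 := by
  have key := omega2_key p q hp hq hpq
  exact ⟨by rw [key.2.1, h], by rw [key.2.2, h]⟩
end

section
/- The twist table of each transposed doubling product is the transpose of the twist table of the corresponding plain product: for all natural numbers p and q, ω₀*(p, q) = ω₀(q, p), ω₁*(p, q) = ω₁(q, p), ω₂*(p, q) = ω₂(q, p), and ω₃*(p, q) = ω₃(q, p). -/
/-- Twist of the Cayley–Dickson doubling product `P₃ : (a,b)(c,d) = (ac − db*, a*d + cb)`. -/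
def omega3 (p q : ℕ) : ℤ :=
  if p = 0 ∧ q = 0 then 1
  else if p % 2 = 0 then
    if q % 2 = 0 then omega3 (p / 2) (q / 2)
    else if 0 < p / 2 then -omega3 (p / 2) (q / 2) else 1
  else
    if q % 2 = 0 then omega3 (q / 2) (p / 2)
    else if 0 < p / 2 then omega3 (q / 2) (p / 2) else -1
termination_by p + q
decreasing_by all_goals omega

/-- Twist of the transposed doubling product `P₀ᵗ : (a,b)(c,d) = (ca − bd*, ad + c*b)`. -/
def omega0t (p q : ℕ) : ℤ :=
  if p = 0 ∧ q = 0 then 1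
  else if p % 2 = 0 then
    if q % 2 = 0 then omega0t (q / 2) (p / 2)
    else omega0t (p / 2) (q / 2)
  else
    if q % 2 = 0 then
      if 0 < q / 2 then -omega0t (q / 2) (p / 2) else 1
    else if 0 < q / 2 then omega0t (p / 2) (q / 2) else -1
termination_by p + q
decreasing_by all_goals omega

/-- Twist of the transposed doubling product `P₁ᵗ : (a,b)(c,d) = (ca − d*b, da + bc*)`. -/
def omega1t (p q : ℕ) : ℤ :=
  if p = 0 ∧ q = 0 then 1
  else if p % 2 = 0 then
    if q % 2 = 0 then omega1t (q / 2) (p / 2)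
    else omega1t (q / 2) (p / 2)
  else
    if q % 2 = 0 then
      if 0 < q / 2 then -omega1t (p / 2) (q / 2) else 1
    else if 0 < q / 2 then omega1t (q / 2) (p / 2) else -1
termination_by p + q
decreasing_by all_goals omega

/-- Twist of the transposed doubling product `P₂ᵗ : (a,b)(c,d) = (ac − bd*, ad + c*b)`. -/
def omega2t (p q : ℕ) : ℤ :=
  if p = 0 ∧ q = 0 then 1
  else if p % 2 = 0 then
    if q % 2 = 0 then omega2t (p / 2) (q / 2)
    else omega2t (p / 2) (q / 2)
  else
    if q % 2 = 0 then
      if 0 < q / 2 then -omega2t (q / 2) (p / 2) else 1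
    else if 0 < q / 2 then omega2t (p / 2) (q / 2) else -1
termination_by p + q
decreasing_by all_goals omega

/-- Twist of the transposed doubling product `P₃ᵗ : (a,b)(c,d) = (ac − d*b, da + bc*)`. -/
def omega3t (p q : ℕ) : ℤ :=
  if p = 0 ∧ q = 0 then 1
  else if p % 2 = 0 then
    if q % 2 = 0 then omega3t (p / 2) (q / 2)
    else omega3t (q / 2) (p / 2)
  else
    if q % 2 = 0 then
      if 0 < q / 2 then -omega3t (p / 2) (q / 2) else 1
    else if 0 < q / 2 then omega3t (q / 2) (p / 2) else -1
termination_by p + q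
decreasing_by all_goals omega


theorem aux0 : ∀ n p q, p + q ≤ n → omega0t p q = omega0 q p := by
  intro n
  induction n with
  | zero =>
    intro p q h
    obtain ⟨rfl, rfl⟩ : p = 0 ∧ q = 0 := by omega
    rw [omega0t, omega0]
    norm_num
  | succ n ih =>
    intro p q h
    rw [omega0t, omega0]
    split_ifs <;>
      first
        | omega
        | rfl
        | exact ih _ _ (by omega)
        | exact congrArg Neg.neg (ih _ _ (by omega))

theorem aux1 : ∀ n p q, p + q ≤ n → omega1t p q = omega1 q p := by
  intro n
  induction n with
  | zero =>
    intro p q h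
    obtain ⟨rfl, rfl⟩ : p = 0 ∧ q = 0 := by omega
    rw [omega1t, omega1]
    norm_num
  | succ n ih =>
    intro p q h
    rw [omega1t, omega1]
    split_ifs <;>
      first
        | omega
        | rfl
        | exact ih _ _ (by omega)
        | exact congrArg Neg.neg (ih _ _ (by omega))

theorem aux2 : ∀ n p q, p + q ≤ n → omega2t p q = omega2 q p := by
  intro n
  induction n with
  | zero =>
    intro p q h
    obtain ⟨rfl, rfl⟩ : p = 0 ∧ q = 0 := by omega
    rw [omega2t, omega2]
    norm_num
  | succ n ih =>
    intro p q h
    rw [omega2t, omega2]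
    split_ifs <;>
      first
        | omega
        | rfl
        | exact ih _ _ (by omega)
        | exact congrArg Neg.neg (ih _ _ (by omega))

theorem aux3 : ∀ n p q, p + q ≤ n → omega3t p q = omega3 q p := by
  intro n
  induction n with
  | zero =>
    intro p q h
    obtain ⟨rfl, rfl⟩ : p = 0 ∧ q = 0 := by omega
    rw [omega3t, omega3]
    norm_num
  | succ n ih =>
    intro p q h
    rw [omega3t, omega3]
    split_ifs <;>
      first
        | omega
        | rfl
        | exact ih _ _ (by omega)
        | exact congrArg Neg.neg (ih _ _ (by omega))

/-- The twist table of each transposed doubling product is the transpose of the twist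
table of the corresponding plain product. -/
theorem transposed_twists_are_transposes (p q : ℕ) :
    omega0t p q = omega0 q p ∧ omega1t p q = omega1 q p ∧
    omega2t p q = omega2 q p ∧ omega3t p q = omega3 q p := by
  exact ⟨aux0 (p+q) p q le_rfl, aux1 (p+q) p q le_rfl,
    aux2 (p+q) p q le_rfl, aux3 (p+q) p q le_rfl⟩
end

section
/- Recursive generation of triples for P₂: for all natural numbers p, q with 1 ≤ p, 1 ≤ q, p ≠ q, if ω₂(p, q) = 1 and r = p ^^^ q, then ω₂(2p, 2q) = 1, ω₂(2p, 2q+1) = 1, ω₂(2p+1, 2q) = 1 and ω₂(2p+1, 2q+1) = 1; that is, the triple (p,q,r) generates the triples (2p,2q,2r), (2p,2q+1,2r+1), (2p+1,2q,2r+1) and (2p+1,2q+1,2r). -/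
lemma omega2_ee_s11 (p q : ℕ) (h : ¬(p = 0 ∧ q = 0)) (hp : p % 2 = 0) (hq : q % 2 = 0) :
    omega2 p q = omega2 (p / 2) (q / 2) := by rw [omega2]; simp [h, hp, hq]

lemma omega2_eo_s11 (p q : ℕ) (hp : p % 2 = 0) (hq : q % 2 = 1) (h2 : 0 < p / 2) :
    omega2 p q = -omega2 (q / 2) (p / 2) := by
  rw [omega2]; simp [hp, hq, h2, show ¬(p = 0 ∧ q = 0) by omega]

lemma omega2_eo0 (p q : ℕ) (hp : p % 2 = 0) (hq : q % 2 = 1) (h2 : p / 2 = 0) :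
    omega2 p q = 1 := by
  rw [omega2]; simp [hp, hq, h2, show ¬(p = 0 ∧ q = 0) by omega]

lemma omega2_oe_s11 (p q : ℕ) (hp : p % 2 = 1) (hq : q % 2 = 0) :
    omega2 p q = omega2 (p / 2) (q / 2) := by
  rw [omega2]; simp [hp, hq, show ¬(p = 0 ∧ q = 0) by omega]

lemma omega2_oo_s11 (p q : ℕ) (hp : p % 2 = 1) (hq : q % 2 = 1) (h2 : 0 < p / 2) :
    omega2 p q = omega2 (p / 2) (q / 2) := by
  rw [omega2]; simp [hp, hq, h2, show ¬(p = 0 ∧ q = 0) by omega]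

lemma omega2_oo0 (p q : ℕ) (hp : p % 2 = 1) (hq : q % 2 = 1) (h2 : p / 2 = 0) :
    omega2 p q = -1 := by
  rw [omega2]; simp [hp, hq, h2, show ¬(p = 0 ∧ q = 0) by omega]

lemma omega2_zero_right_s11 : ∀ n, omega2 n 0 = 1 := by
  intro n
  induction n using Nat.strong_induction_on with
  | _ n ih =>
    rcases Nat.eq_zero_or_pos n with h | h
    · rw [omega2]; simp [h]
    · have hlt : n / 2 < n := Nat.div_lt_self h (by norm_num)
      rcases Nat.mod_two_eq_zero_or_one n with h2 | h2
      · rw [omega2_ee_s11 n 0 (by omega) h2 rfl]; exact ih _ hlt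
      · rw [omega2_oe_s11 n 0 h2 rfl]; exact ih _ hlt

lemma omega2_antisymm : ∀ n p q, p + q ≤ n → 1 ≤ p → 1 ≤ q → p ≠ q →
    omega2 q p = -omega2 p q := by
  intro n
  induction n using Nat.strong_induction_on with
  | _ n ih =>
    intro p q hn hp hq hpq
    rcases Nat.mod_two_eq_zero_or_one p with hp2 | hp2 <;>
      rcases Nat.mod_two_eq_zero_or_one q with hq2 | hq2
    · rw [omega2_ee_s11 p q (by omega) hp2 hq2, omega2_ee_s11 q p (by omega) hq2 hp2]
      exact ih (p/2 + q/2) (by omega) (p/2) (q/2) le_rfl (by omega) (by omega) (by omega)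
    · rw [omega2_eo_s11 p q hp2 hq2 (by omega), omega2_oe_s11 q p hq2 hp2, neg_neg]
    · rw [omega2_oe_s11 p q hp2 hq2, omega2_eo_s11 q p hq2 hp2 (by omega)]
    · rcases Nat.eq_zero_or_pos (p/2) with hr | hr <;>
        rcases Nat.eq_zero_or_pos (q/2) with hs | hs
      · omega
      · rw [omega2_oo0 p q hp2 hq2 hr, omega2_oo_s11 q p hq2 hp2 hs, hr,
          omega2_zero_right_s11, neg_neg]
      · rw [omega2_oo_s11 p q hp2 hq2 hr, omega2_oo0 q p hq2 hp2 hs, hs,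
          omega2_zero_right_s11]
      · rw [omega2_oo_s11 p q hp2 hq2 hr, omega2_oo_s11 q p hq2 hp2 hs]
        exact ih (p/2 + q/2) (by omega) (p/2) (q/2) le_rfl hr hs (by omega)

/-- Recursive generation of structure-constant triples for the doubling product P2. -/
theorem omega2_triple_generation (p q r : ℕ) (hp : 1 ≤ p) (hq : 1 ≤ q) (hpq : p ≠ q)
    (h : omega2 p q = 1) (hr : r = p ^^^ q) :
    omega2 (2 * p) (2 * q) = 1 ∧
    omega2 (2 * p) (2 * q + 1) = 1 ∧
    omega2 (2 * p + 1) (2 * q) = 1 ∧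
    omega2 (2 * p + 1) (2 * q + 1) = 1 := by
  have hanti := omega2_antisymm (p + q) p q le_rfl hp hq hpq
  have d1 : (2 * p) / 2 = p := by omega
  have d2 : (2 * q) / 2 = q := by omega
  have d3 : (2 * p + 1) / 2 = p := by omega
  have d4 : (2 * q + 1) / 2 = q := by omega
  refine ⟨?_, ?_, ?_, ?_⟩
  · rw [omega2_ee_s11 _ _ (by omega) (by omega) (by omega), d1, d2]; exact h
  · rw [omega2_eo_s11 _ _ (by omega) (by omega) (by omega), d1, d4, hanti, h]; norm_num
  · rw [omega2_oe_s11 _ _ (by omega) (by omega), d2, d3]; exact h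
  · rw [omega2_oo_s11 _ _ (by omega) (by omega) (by omega), d3, d4]; exact h
end

section
/- Octonion Fano-plane characterization for P₂: for all natural numbers p, q with 1 ≤ p ≤ 7 and 1 ≤ q ≤ 7, ω₂(p, q) = 1 if and only if the ordered pair (p, q) belongs to the set {(1,2),(2,3),(3,1),(1,4),(4,5),(5,1),(1,6),(6,7),(7,1),(2,4),(4,6),(6,2),(7,2),(2,5),(5,7),(5,6),(6,3),(3,5),(3,4),(4,7),(7,3)} (i.e. the quaternion triples of the octonions under P₂ are exactly (1,2,3), (1,4,5), (1,6,7), (2,4,6), (7,2,5), (5,6,3), (3,4,7)). -/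
/-- Octonion Fano-plane characterization for the doubling product P₂. -/
theorem omega2_octonion_fano (p q : ℕ) (hp1 : 1 ≤ p) (hp7 : p ≤ 7) (hq1 : 1 ≤ q) (hq7 : q ≤ 7) :
    omega2 p q = 1 ↔
      (p, q) ∈ ({(1,2),(2,3),(3,1),(1,4),(4,5),(5,1),(1,6),(6,7),(7,1),(2,4),(4,6),(6,2),(7,2),(2,5),(5,7),(5,6),(6,3),(3,5),(3,4),(4,7),(7,3)} : Set (ℕ × ℕ)) := by
  interval_cases p <;> interval_cases q <;>
    simp only [Set.mem_insert_iff, Set.mem_singleton_iff, Prod.mk.injEq] <;>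
    (repeat (rw [omega2]; norm_num))
end

section
/- Cyclic permutations preserving the octonion triples: let σ₀ : ℕ → ℕ be the 7-cycle with σ₀(1)=2, σ₀(2)=6, σ₀(6)=3, σ₀(3)=4, σ₀(4)=5, σ₀(5)=7, σ₀(7)=1, and let σ₃ : ℕ → ℕ be the 7-cycle with σ₃(1)=2, σ₃(2)=4, σ₃(4)=3, σ₃(3)=6, σ₃(6)=7, σ₃(7)=5, σ₃(5)=1. Then for all p, q with 1 ≤ p ≤ 7, 1 ≤ q ≤ 7: if ω₀(p, q) = 1 then ω₀(σ₀(p), σ₀(q)) = 1, and if ω₃(p, q) = 1 then ω₃(σ₃(p), σ₃(q)) = 1. -/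
/-- The 7-cycle (1 2 6 3 4 5 7) on the imaginary octonion units, fixing all other
natural numbers. -/
def sigma0 : ℕ → ℕ
  | 1 => 2
  | 2 => 6
  | 6 => 3
  | 3 => 4
  | 4 => 5
  | 5 => 7
  | 7 => 1
  | n => n

/-- The 7-cycle (1 2 4 3 6 7 5) on the imaginary octonion units, fixing all other
natural numbers. -/
def sigma3 : ℕ → ℕ
  | 1 => 2
  | 2 => 4
  | 4 => 3
  | 3 => 6
  | 6 => 7
  | 7 => 5
  | 5 => 1
  | n => n

/-- The 7-cycles `sigma0` and `sigma3` preserve the octonion structure-constant triples of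
the doubling products P₀ and P₃ respectively. -/
theorem cycles_preserve_octonion_triples (p q : ℕ)
    (hp1 : 1 ≤ p) (hp7 : p ≤ 7) (hq1 : 1 ≤ q) (hq7 : q ≤ 7) :
    (omega0 p q = 1 → omega0 (sigma0 p) (sigma0 q) = 1) ∧
    (omega3 p q = 1 → omega3 (sigma3 p) (sigma3 q) = 1) := by
  interval_cases p <;> interval_cases q <;>
    constructor <;> (intro h; revert h) <;>
    simp [omega0, omega3, sigma0, sigma3]
end
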